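/- Let X and Y be random variables on a probability space (Ω, μ) (μ a probability measure) taking values in finite types 𝒳 and 𝒴, let 𝓜 be a finite type, let φ : 𝒳 × 𝒴 → 𝓜, and set M = φ(X, Y). If there exists a map ψ : 𝓜 × 𝒳 → 𝒴 such that ψ(M, X) = Y almost surely, then H[M] ≥ H[Y | X]. -/
import Mathlib


open MeasureTheory

/-- Shannon entropy of a random variable taking values in a finite type. -/
noncomputable def ent {Ω : Type*} [MeasurableSpace Ω] (μ : Measure Ω)
    {α : Type*} [Fintype α] (X : Ω → α) : ℝ :=
  ∑ a : α, Real.negMulLog ((μ (X ⁻¹' {a})).toReal)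

/-- `condEnt μ X Y` is the conditional Shannon entropy `H[Y | X]`. -/
noncomputable def condEnt {Ω : Type*} [MeasurableSpace Ω] (μ : Measure Ω)
    {α β : Type*} [Fintype α] [Fintype β] (X : Ω → α) (Y : Ω → β) : ℝ :=
  ent μ (fun ω => (X ω, Y ω)) - ent μ X

/-- superadditivity of `negMulLog`: entropy of a merged mass is at most the sum. -/
lemma negMulLog_sum_le' {ι : Type*} (s : Finset ι) (p : ι → ℝ) (hp : ∀ i ∈ s, 0 ≤ p i) :
    Real.negMulLog (∑ i ∈ s, p i) ≤ ∑ i ∈ s, Real.negMulLog (p i) := by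
  set S := ∑ i ∈ s, p i with hS
  have hS0 : 0 ≤ S := Finset.sum_nonneg hp
  have hexp : Real.negMulLog S = ∑ i ∈ s, p i * (-Real.log S) := by
    rw [← Finset.sum_mul, ← hS, Real.negMulLog]
    ring
  rw [hexp]
  apply Finset.sum_le_sum
  intro i hi
  rcases eq_or_lt_of_le (hp i hi) with h | h
  · simp [← h]
  · have hle : p i ≤ S := Finset.single_le_sum hp hi
    have hlog : Real.log (p i) ≤ Real.log S := Real.log_le_log h hle
    have : -Real.log S ≤ -Real.log (p i) := by linarith
    calc p i * (-Real.log S) ≤ p i * (-Real.log (p i)) := by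
          exact mul_le_mul_of_nonneg_left this (le_of_lt h)
      _ = Real.negMulLog (p i) := by rw [Real.negMulLog]; ring

/-- Entropy of a function of a random variable is at most its entropy. -/
lemma ent_comp_le {Ω α β : Type*} [MeasurableSpace Ω] (μ : Measure Ω) [IsFiniteMeasure μ]
    [Fintype α] [Fintype β] (W : Ω → α) (hW : ∀ a, MeasurableSet (W ⁻¹' {a}))
    (f : α → β) : ent μ (fun ω => f (W ω)) ≤ ent μ W := by
  classical
  have key : ∀ b : β, (μ ((fun ω => f (W ω)) ⁻¹' {b})).toReal
      = ∑ a ∈ Finset.univ.filter (fun a => f a = b), (μ (W ⁻¹' {a})).toReal := by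
    intro b
    have hset : (fun ω => f (W ω)) ⁻¹' {b}
        = W ⁻¹' ↑(Finset.univ.filter (fun a => f a = b)) := by
      ext ω; simp
    rw [hset, ← sum_measure_preimage_singleton _ (fun a _ => hW a),
      ENNReal.toReal_sum (fun a _ => measure_ne_top μ _)]
  calc ent μ (fun ω => f (W ω))
      = ∑ b : β, Real.negMulLog (∑ a ∈ Finset.univ.filter (fun a => f a = b),
          (μ (W ⁻¹' {a})).toReal) := by
        unfold ent; exact Finset.sum_congr rfl fun b _ => by rw [key b]
    _ ≤ ∑ b : β, ∑ a ∈ Finset.univ.filter (fun a => f a = b),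
          Real.negMulLog ((μ (W ⁻¹' {a})).toReal) := by
        apply Finset.sum_le_sum
        intro b _
        exact negMulLog_sum_le' _ _ (fun a _ => ENNReal.toReal_nonneg)
    _ = ∑ a : α, Real.negMulLog ((μ (W ⁻¹' {a})).toReal) :=
        Finset.sum_fiberwise _ f _
    _ = ent μ W := rfl

/-- The key pointwise inequality for subadditivity of entropy. -/
lemma key_ineq {p q r : ℝ} (hp : 0 ≤ p) (hq : 0 ≤ q) (hr : 0 ≤ r)
    (hpq : p ≤ q) (hpr : p ≤ r) :
    Real.negMulLog p ≤ p * (-Real.log q) + p * (-Real.log r) + (q * r - p) := by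
  rcases eq_or_lt_of_le hp with h | h
  · rw [← h]
    simp [mul_nonneg hq hr]
  · have hq' : 0 < q := lt_of_lt_of_le h hpq
    have hr' : 0 < r := lt_of_lt_of_le h hpr
    have ht : 0 < q * r / p := by positivity
    have hlog := Real.log_le_sub_one_of_pos ht
    have hlogeq : Real.log (q * r / p) = Real.log q + Real.log r - Real.log p := by
      rw [Real.log_div (by positivity) (ne_of_gt h), Real.log_mul (ne_of_gt hq') (ne_of_gt hr')]
    have hmul : p * Real.log (q * r / p) ≤ p * (q * r / p - 1) :=
      mul_le_mul_of_nonneg_left hlog hp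
    have : p * (q * r / p - 1) = q * r - p := by field_simp
    rw [this, hlogeq] at hmul
    rw [Real.negMulLog]
    nlinarith [hmul]

/-- Subadditivity of Shannon entropy. -/
lemma ent_pair_le {Ω α β : Type*} [MeasurableSpace Ω] (μ : Measure Ω) [IsProbabilityMeasure μ]
    [Fintype α] [Fintype β] (A : Ω → α) (B : Ω → β)
    (hA : ∀ a, MeasurableSet (A ⁻¹' {a})) (hB : ∀ b, MeasurableSet (B ⁻¹' {b})) :
    ent μ (fun ω => (A ω, B ω)) ≤ ent μ A + ent μ B := by
  classical
  set P : Ω → α × β := fun ω => (A ω, B ω) with hPdef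
  have hPset : ∀ c : α × β, P ⁻¹' {c} = A ⁻¹' {c.1} ∩ B ⁻¹' {c.2} := by
    intro c; ext ω; simp [hPdef, Prod.ext_iff]
  have hPm : ∀ c : α × β, MeasurableSet (P ⁻¹' {c}) := by
    intro c; rw [hPset c]; exact (hA c.1).inter (hB c.2)
  set p : α × β → ℝ := fun c => (μ (P ⁻¹' {c})).toReal with hpdef
  have hp0 : ∀ c, 0 ≤ p c := fun c => ENNReal.toReal_nonneg
  set q : α → ℝ := fun a => (μ (A ⁻¹' {a})).toReal with hqdef
  set r : β → ℝ := fun b => (μ (B ⁻¹' {b})).toReal with hrdef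
  -- marginals
  have hq : ∀ a, q a = ∑ b, p (a, b) := by
    intro a
    have h1 : ∀ b : β, μ (P ⁻¹' {(a, b)}) = (μ.restrict (A ⁻¹' {a})) (B ⁻¹' {b}) := by
      intro b
      rw [Measure.restrict_apply (hB b), hPset, Set.inter_comm]
    have h2 : ∑ b : β, (μ.restrict (A ⁻¹' {a})) (B ⁻¹' {b}) = μ (A ⁻¹' {a}) := by
      rw [sum_measure_preimage_singleton _ (fun b _ => hB b)]
      simp [Measure.restrict_apply_univ]
    rw [hqdef]
    simp only [hpdef, h1]
    rw [← ENNReal.toReal_sum (fun b _ => measure_ne_top _ _), h2]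
  have hr : ∀ b, r b = ∑ a, p (a, b) := by
    intro b
    have h1 : ∀ a : α, μ (P ⁻¹' {(a, b)}) = (μ.restrict (B ⁻¹' {b})) (A ⁻¹' {a}) := by
      intro a
      rw [Measure.restrict_apply (hA a), hPset]
    have h2 : ∑ a : α, (μ.restrict (B ⁻¹' {b})) (A ⁻¹' {a}) = μ (B ⁻¹' {b}) := by
      rw [sum_measure_preimage_singleton _ (fun a _ => hA a)]
      simp [Measure.restrict_apply_univ]
    rw [hrdef]
    simp only [hpdef, h1]
    rw [← ENNReal.toReal_sum (fun a _ => measure_ne_top _ _), h2]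
  have htot : ∑ c : α × β, p c = 1 := by
    have := sum_measure_preimage_singleton (μ := μ) (Finset.univ : Finset (α × β))
      (f := P) (fun c _ => hPm c)
    simp only [Finset.coe_univ, Set.preimage_univ, measure_univ] at this
    rw [hpdef]
    rw [← ENNReal.toReal_sum (fun c _ => measure_ne_top _ _), this, ENNReal.toReal_one]
  have hqtot : ∑ a : α, q a = 1 := by
    rw [← htot, Fintype.sum_prod_type]
    exact Finset.sum_congr rfl fun a _ => hq a
  have hrtot : ∑ b : β, r b = 1 := by
    rw [← htot, Fintype.sum_prod_type, Finset.sum_comm]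
    exact Finset.sum_congr rfl fun b _ => hr b
  have hpq : ∀ c : α × β, p c ≤ q c.1 := by
    intro c
    rw [hq c.1]
    exact Finset.single_le_sum (fun b _ => hp0 (c.1, b)) (Finset.mem_univ c.2)
  have hpr : ∀ c : α × β, p c ≤ r c.2 := by
    intro c
    rw [hr c.2]
    exact Finset.single_le_sum (fun a _ => hp0 (a, c.2)) (Finset.mem_univ c.1)
  -- main computation
  have hmain : ∑ c : α × β, Real.negMulLog (p c)
      ≤ ∑ c : α × β, (p c * (-Real.log (q c.1)) + p c * (-Real.log (r c.2))
          + (q c.1 * r c.2 - p c)) := by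
    apply Finset.sum_le_sum
    intro c _
    exact key_ineq (hp0 c) (ENNReal.toReal_nonneg) (ENNReal.toReal_nonneg) (hpq c) (hpr c)
  have hsplit : ∑ c : α × β, (p c * (-Real.log (q c.1)) + p c * (-Real.log (r c.2))
      + (q c.1 * r c.2 - p c)) = ent μ A + ent μ B := by
    rw [Finset.sum_add_distrib, Finset.sum_add_distrib]
    have e1 : ∑ c : α × β, p c * (-Real.log (q c.1)) = ent μ A := by
      rw [Fintype.sum_prod_type]
      unfold ent
      apply Finset.sum_congr rfl
      intro a _
      have : ∑ y : β, p (a, y) * (-Real.log (q (a, y).1))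
          = (∑ y : β, p (a, y)) * (-Real.log (q a)) := by rw [Finset.sum_mul]
      rw [this, ← hq a, Real.negMulLog]
      ring
    have e2 : ∑ c : α × β, p c * (-Real.log (r c.2)) = ent μ B := by
      rw [Fintype.sum_prod_type, Finset.sum_comm]
      unfold ent
      apply Finset.sum_congr rfl
      intro b _
      have : ∑ x : α, p (x, b) * (-Real.log (r (x, b).2))
          = (∑ x : α, p (x, b)) * (-Real.log (r b)) := by rw [Finset.sum_mul]
      rw [this, ← hr b, Real.negMulLog]
      ring
    have e3 : ∑ c : α × β, (q c.1 * r c.2 - p c) = 0 := by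
      rw [Finset.sum_sub_distrib, htot]
      have : ∑ c : α × β, q c.1 * r c.2 = (∑ a, q a) * (∑ b, r b) := by
        rw [Finset.sum_mul_sum, Fintype.sum_prod_type]
      rw [this, hqtot, hrtot]
      norm_num
    rw [e1, e2, e3, add_zero]
  calc ent μ P = ∑ c : α × β, Real.negMulLog (p c) := rfl
    _ ≤ _ := hmain
    _ = ent μ A + ent μ B := hsplit

/-- Entropy only depends on the a.e. equivalence class. -/
lemma ent_congr {Ω α : Type*} [MeasurableSpace Ω] (μ : Measure Ω) [Fintype α]
    {f g : Ω → α} (h : f =ᵐ[μ] g) : ent μ f = ent μ g := by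
  unfold ent
  apply Finset.sum_congr rfl
  intro a _
  have : f ⁻¹' {a} =ᵐ[μ] g ⁻¹' {a} := by
    filter_upwards [h] with ω hω
    change (f ω ∈ ({a} : Set α)) = (g ω ∈ ({a} : Set α))
    rw [hω]
  rw [measure_congr this]

/-- Cut-set converse for zero-error source coding of `Y` with decoder side
information `X`: if `Y` can be recovered almost surely from the message
`M = φ(X, Y)` and `X`, then `H[M] ≥ H[Y | X]`. -/
theorem zero_error_side_info_converse
    {Ω : Type*} [MeasurableSpace Ω] (μ : Measure Ω) [IsProbabilityMeasure μ]
    {𝒳 𝒴 𝓜 : Type*} [Fintype 𝒳] [Fintype 𝒴] [Fintype 𝓜]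
    [MeasurableSpace 𝒳] [MeasurableSingletonClass 𝒳]
    [MeasurableSpace 𝒴] [MeasurableSingletonClass 𝒴]
    (X : Ω → 𝒳) (Y : Ω → 𝒴) (hX : Measurable X) (hY : Measurable Y)
    (φ : 𝒳 × 𝒴 → 𝓜)
    (hdec : ∃ ψ : 𝓜 × 𝒳 → 𝒴, ∀ᵐ ω ∂μ, ψ (φ (X ω, Y ω), X ω) = Y ω) :
    ent μ (fun ω => φ (X ω, Y ω)) ≥ condEnt μ X Y := by
  classical
  obtain ⟨ψ, hψ⟩ := hdec
  set XY : Ω → 𝒳 × 𝒴 := fun ω => (X ω, Y ω) with hXYdef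
  have hXYm : Measurable XY := hX.prodMk hY
  set M : Ω → 𝓜 := fun ω => φ (XY ω) with hMdef
  set W : Ω → 𝓜 × 𝒳 := fun ω => (M ω, X ω) with hWdef
  -- measurability of singleton preimages
  have hMm : ∀ m : 𝓜, MeasurableSet (M ⁻¹' {m}) := by
    intro m
    have : M ⁻¹' {m} = XY ⁻¹' (φ ⁻¹' {m}) := rfl
    rw [this]
    exact hXYm ((Set.to_countable _).measurableSet)
  have hXm : ∀ x : 𝒳, MeasurableSet (X ⁻¹' {x}) := fun x =>
    hX (MeasurableSet.singleton x)
  have hWm : ∀ c : 𝓜 × 𝒳, MeasurableSet (W ⁻¹' {c}) := by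
    intro c
    have : W ⁻¹' {c} = M ⁻¹' {c.1} ∩ X ⁻¹' {c.2} := by
      ext ω; simp [hWdef, Prod.ext_iff]
    rw [this]
    exact (hMm c.1).inter (hXm c.2)
  -- XY = g ∘ W a.e. where g (m, x) = (x, ψ (m, x))
  set g : 𝓜 × 𝒳 → 𝒳 × 𝒴 := fun c => (c.2, ψ c) with hgdef
  have hae : XY =ᵐ[μ] fun ω => g (W ω) := by
    filter_upwards [hψ] with ω hω
    simp [hXYdef, hgdef, hWdef, hMdef, hω]
  have h1 : ent μ XY = ent μ (fun ω => g (W ω)) := ent_congr μ hae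
  have h2 : ent μ (fun ω => g (W ω)) ≤ ent μ W := ent_comp_le μ W hWm g
  have h3 : ent μ W ≤ ent μ M + ent μ X := ent_pair_le μ M X hMm hXm
  have : ent μ XY ≤ ent μ M + ent μ X := by
    rw [h1]; exact le_trans h2 h3
  unfold condEnt
  rw [← hXYdef]
  linarith
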